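/- Let I be a finite index set with a distinguished element 0, and let S be an invertible I×I matrix over ℂ such that S φ 0 ≠ 0 for every φ ∈ I. Define structure constants N λ μ ν = Σ_{φ∈I} (S φ λ)·(S φ μ)·(S⁻¹ ν φ)/(S φ 0), and let V be the free ℂ-module with basis (e λ)_{λ∈I}, equipped with the ℂ-bilinear product determined on basis vectors by e λ · e μ = Σ_{ν∈I} N λ μ ν · e ν. Then this product makes V a commutative, associative, unital ℂ-algebra whose identity element is e 0. -/

import Mathlib

open Matrix BigOperators

/-- The Verlinde structure constants attached to a matrix `S` indexed by a finite
set `I` with a distinguished index `z`: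
`N λ μ ν = ∑ φ, S φ λ * S φ μ * S⁻¹ ν φ / S φ z`. -/
noncomputable def verlindeN {I : Type*} [Fintype I] [DecidableEq I]
    (S : Matrix I I ℂ) (z : I) (lam mu nu : I) : ℂ :=
  ∑ φ, S φ lam * S φ mu * S⁻¹ nu φ / S φ z

/-- The bilinear Verlinde product on the free ℂ-module `I → ℂ` (with standard
basis `e λ = Pi.single λ 1`), determined on basis vectors by
`e λ · e μ = ∑ ν, N λ μ ν • e ν`. -/
noncomputable def verlindeMul {I : Type*} [Fintype I] [DecidableEq I]
    (S : Matrix I I ℂ) (z : I) (x y : I → ℂ) : I → ℂ :=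
  fun nu => ∑ lam, ∑ mu, x lam * y mu * verlindeN S z lam mu nu

/-- The Verlinde product makes the free ℂ-module with basis indexed by `I` a
commutative associative unital algebra with identity `e z = Pi.single z 1`,
provided `S` is invertible and the column of `S` at the distinguished index `z`
has no zero entries. -/
noncomputable def vF {I : Type*} [Fintype I] (S : Matrix I I ℂ) (z : I) (x : I → ℂ) : I → ℂ :=
  fun φ => (∑ lam, x lam * S φ lam) / S φ z

noncomputable def vG {I : Type*} [Fintype I] [DecidableEq I] (S : Matrix I I ℂ) (z : I)
    (c : I → ℂ) : I → ℂ :=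
  fun nu => ∑ φ, S φ z * c φ * S⁻¹ nu φ

lemma verlindeMul_eq {I : Type*} [Fintype I] [DecidableEq I]
    (S : Matrix I I ℂ) (z : I) (h0 : ∀ φ : I, S φ z ≠ 0) (x y : I → ℂ) :
    verlindeMul S z x y = vG S z (fun φ => vF S z x φ * vF S z y φ) := by
  funext nu
  simp only [verlindeMul, verlindeN, vG, vF, Finset.mul_sum]
  have h1 : ∀ lam : I, (∑ mu, ∑ φ, x lam * y mu * (S φ lam * S φ mu * S⁻¹ nu φ / S φ z))
      = ∑ φ, ∑ mu, x lam * y mu * (S φ lam * S φ mu * S⁻¹ nu φ / S φ z) :=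
    fun lam => Finset.sum_comm
  simp only [h1]
  rw [Finset.sum_comm]
  refine Finset.sum_congr rfl fun φ _ => ?_
  have hrhs : S φ z * ((∑ lam, x lam * S φ lam) / S φ z * ((∑ lam, y lam * S φ lam) / S φ z))
        * S⁻¹ nu φ
      = (∑ lam, x lam * S φ lam) * (∑ lam, y lam * S φ lam) * S⁻¹ nu φ / S φ z := by
    have key : ∀ d A B C : ℂ, d ≠ 0 → d * (A / d * (B / d)) * C = A * B * C / d := by
      intro d A B C hd
      field_simp
    exact key _ _ _ _ (h0 φ)
  rw [hrhs, Finset.sum_mul_sum, Finset.sum_mul, Finset.sum_div]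
  refine Finset.sum_congr rfl fun lam _ => ?_
  rw [Finset.sum_mul, Finset.sum_div]
  exact Finset.sum_congr rfl fun mu _ => by ring

lemma vF_vG {I : Type*} [Fintype I] [DecidableEq I]
    (S : Matrix I I ℂ) (z : I) (hS : IsUnit S.det) (h0 : ∀ φ : I, S φ z ≠ 0)
    (c : I → ℂ) : vF S z (vG S z c) = c := by
  funext ψ
  simp only [vF, vG]
  rw [div_eq_iff (h0 ψ)]
  have hid : S * S⁻¹ = 1 := Matrix.mul_nonsing_inv S hS
  calc ∑ lam, (∑ φ, S φ z * c φ * S⁻¹ lam φ) * S ψ lam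
      = ∑ φ, S φ z * c φ * (∑ lam, S ψ lam * S⁻¹ lam φ) := by
        simp only [Finset.sum_mul]
        rw [Finset.sum_comm]
        refine Finset.sum_congr rfl fun φ _ => ?_
        rw [Finset.mul_sum]
        exact Finset.sum_congr rfl fun lam _ => by ring
    _ = ∑ φ, S φ z * c φ * (1 : Matrix I I ℂ) ψ φ := by
        refine Finset.sum_congr rfl fun φ _ => ?_
        rw [← Matrix.mul_apply, hid]
    _ = c ψ * S ψ z := by
        rw [Finset.sum_eq_single ψ] <;> simp +contextual [Matrix.one_apply, eq_comm]
        ring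

lemma vG_vF {I : Type*} [Fintype I] [DecidableEq I]
    (S : Matrix I I ℂ) (z : I) (hS : IsUnit S.det) (h0 : ∀ φ : I, S φ z ≠ 0)
    (x : I → ℂ) : vG S z (vF S z x) = x := by
  funext nu
  simp only [vF, vG]
  have hid : S⁻¹ * S = 1 := Matrix.nonsing_inv_mul S hS
  calc ∑ φ, S φ z * ((∑ lam, x lam * S φ lam) / S φ z) * S⁻¹ nu φ
      = ∑ φ, ∑ lam, x lam * (S⁻¹ nu φ * S φ lam) := by
        refine Finset.sum_congr rfl fun φ _ => ?_
        rw [mul_comm (S φ z), div_mul_cancel₀ _ (h0 φ), Finset.sum_mul]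
        exact Finset.sum_congr rfl fun lam _ => by ring
    _ = ∑ lam, x lam * (S⁻¹ * S) nu lam := by
        rw [Finset.sum_comm]
        simp [Matrix.mul_apply, Finset.mul_sum]
    _ = x nu := by simp [hid, Matrix.one_apply, Finset.sum_eq_single nu]

lemma vF_single {I : Type*} [Fintype I] [DecidableEq I]
    (S : Matrix I I ℂ) (z : I) (h0 : ∀ φ : I, S φ z ≠ 0) :
    vF S z (Pi.single z 1) = fun _ => 1 := by
  funext φ
  simp only [vF]
  rw [Finset.sum_eq_single z]
  · simp [div_self (h0 φ)]
  · intro b _ hb; simp [Pi.single_eq_of_ne hb]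
  · simp

theorem verlinde_product_comm_assoc_unital
    {I : Type*} [Fintype I] [DecidableEq I]
    (S : Matrix I I ℂ) (z : I) (hS : IsUnit S.det)
    (h0 : ∀ φ : I, S φ z ≠ 0) :
    (∀ x y : I → ℂ, verlindeMul S z x y = verlindeMul S z y x) ∧
    (∀ x y w : I → ℂ,
      verlindeMul S z (verlindeMul S z x y) w
        = verlindeMul S z x (verlindeMul S z y w)) ∧
    (∀ x : I → ℂ, verlindeMul S z (Pi.single z 1) x = x) ∧
    (∀ x : I → ℂ, verlindeMul S z x (Pi.single z 1) = x) := by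
  refine ⟨fun x y => ?_, fun x y w => ?_, fun x => ?_, fun x => ?_⟩
  · rw [verlindeMul_eq S z h0, verlindeMul_eq S z h0]
    funext nu
    simp only [vG]
    exact Finset.sum_congr rfl fun φ _ => by ring
  · rw [verlindeMul_eq S z h0, verlindeMul_eq S z h0, verlindeMul_eq S z h0,
      verlindeMul_eq S z h0, vF_vG S z hS h0, vF_vG S z hS h0]
    funext nu
    simp only [vG]
    exact Finset.sum_congr rfl fun φ _ => by ring
  · rw [verlindeMul_eq S z h0, vF_single S z h0]
    simpa using vG_vF S z hS h0 x
  · rw [verlindeMul_eq S z h0, vF_single S z h0]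
    simpa using vG_vF S z hS h0 x
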